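/- arXiv:math/9805109 — 2 statements merged into one kernel-verified Lean document; each statement's English description precedes it below -/
import Mathlib

section
/- Let p > 2 be an integer and suppose a family c_{jkl}^{βγδ} of real numbers (indices j,k,l ∈ {1,...,q}, β,γ,δ ∈ {1,...,p}) satisfies δ_α^ε c_{jkl}^{βγδ} + δ_α^δ c_{ljk}^{βεγ} + δ_α^γ c_{jlk}^{βδε} = 0 for all indices α, ε, γ, δ, β, j, k, l. Then c = 0. -/
/-- For `p > 2`: if a family `c_{jkl}^{βγδ}` of reals satisfies
`δ_α^ε c_{jkl}^{βγδ} + δ_α^δ c_{ljk}^{βεγ} + δ_α^γ c_{jlk}^{βδε} = 0` for all indices,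
then `c = 0`. -/
theorem stmt_11 (p q : ℕ) (hp : 2 < p)
    (c : Fin q → Fin q → Fin q → Fin p → Fin p → Fin p → ℝ)
    (h : ∀ (α ε γ δ β : Fin p) (j k l : Fin q),
      (if α = ε then (1 : ℝ) else 0) * c j k l β γ δ +
      (if α = δ then (1 : ℝ) else 0) * c l j k β ε γ +
      (if α = γ then (1 : ℝ) else 0) * c j l k β δ ε = 0) :
    c = 0 := by
  funext j k l β γ δ
  have hcard : ({γ, δ} : Finset (Fin p)).card < Fintype.card (Fin p) := by
    calc ({γ, δ} : Finset (Fin p)).card ≤ 2 := by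
          exact (Finset.card_insert_le _ _).trans (by simp)
    _ < p := hp
    _ = Fintype.card (Fin p) := (Fintype.card_fin p).symm
  have hpos : 0 < (({γ, δ} : Finset (Fin p))ᶜ).card := by
    rw [Finset.card_compl]; omega
  obtain ⟨α, hα⟩ := Finset.card_pos.mp hpos
  simp only [Finset.mem_compl, Finset.mem_insert, Finset.mem_singleton, not_or] at hα
  have := h α α γ δ β j k l
  simp [hα.1, hα.2] at this
  simpa using this
end

section
/- If p = 2, then any tensor a_{αjk}^{iβγ} with α,β,γ ∈ {1,2}, satisfying the skew-symmetry a_{αjk}^{iβγ} = -a_{αkj}^{iγβ} and the trace conditions a_{αjk}^{iαγ} = 0 and a_{αik}^{iβγ} = 0 (summation over repeated indices), has vanishing part a_α, i.e., a_{α(jk)}^{iβγ} = 0 for all indices. Symmetrically, if q = 2 (so i,j,k ∈ {1,2}) then a_{αjk}^{i(βγ)} = 0. -/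
/-- If `p = 2`, the subtensor `a_α` of the torsion tensor vanishes: every tensor
`a_{αjk}^{iβγ}` with `α,β,γ ∈ {1,2}` satisfying the skew-symmetry and trace conditions
has `a_{α(jk)}^{iβγ} = 0`. Symmetrically, if `q = 2` then `a_{αjk}^{i(βγ)} = 0`. -/
theorem stmt_15 :
    (∀ (q : ℕ) (a : Fin 2 → Fin q → Fin q → Fin q → Fin 2 → Fin 2 → ℝ),
      (∀ α j k i β γ, a α j k i β γ = -a α k j i γ β) →
      (∀ (j k i : Fin q) (γ : Fin 2), ∑ α, a α j k i α γ = 0) →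
      (∀ (α β γ : Fin 2) (k : Fin q), ∑ i, a α i k i β γ = 0) →
      ∀ α j k i β γ, a α j k i β γ + a α k j i β γ = 0) ∧
    (∀ (p : ℕ) (a : Fin p → Fin 2 → Fin 2 → Fin 2 → Fin p → Fin p → ℝ),
      (∀ α j k i β γ, a α j k i β γ = -a α k j i γ β) →
      (∀ (j k i : Fin 2) (γ : Fin p), ∑ α, a α j k i α γ = 0) →
      (∀ (α β γ : Fin p) (k : Fin 2), ∑ i, a α i k i β γ = 0) →
      ∀ α j k i β γ, a α j k i β γ + a α j k i γ β = 0) := by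
  constructor
  · intro q a hskew h1 _h2 α j k i β γ
    -- s α β γ is the symmetrization in (j,k); it is antisymmetric in (β,γ)
    set s : Fin 2 → Fin 2 → Fin 2 → ℝ :=
      fun α β γ => a α j k i β γ + a α k j i β γ with hs
    have hanti : ∀ α β γ, s α β γ = - s α γ β := by
      intro α β γ
      simp only [hs]
      linarith [hskew α j k i β γ, hskew α k j i β γ]
    have hdiag : ∀ α β, s α β β = 0 := by
      intro α β; have := hanti α β β; linarith
    have htr : ∀ γ, s 0 0 γ + s 1 1 γ = 0 := by
      intro γ
      have h := h1 j k i γ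
      have h' := h1 k j i γ
      rw [Fin.sum_univ_two] at h h'
      simp only [hs]
      linarith
    have two : ∀ x : Fin 2, x = 0 ∨ x = 1 := by decide
    show s α β γ = 0
    rcases two α with rfl | rfl <;> rcases two β with rfl | rfl <;>
      rcases two γ with rfl | rfl <;>
      linarith [htr 0, htr 1, hdiag 0 0, hdiag 0 1, hdiag 1 0, hdiag 1 1,
        hanti 0 0 1, hanti 0 1 0, hanti 1 0 1, hanti 1 1 0]
  · intro p a hskew _h1 h2 α j k i β γ
    -- t j k i is the symmetrization in (β,γ); it is antisymmetric in (j,k)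
    set t : Fin 2 → Fin 2 → Fin 2 → ℝ :=
      fun j k i => a α j k i β γ + a α j k i γ β with ht
    have hanti : ∀ j k i, t j k i = - t k j i := by
      intro j k i
      simp only [ht]
      linarith [hskew α j k i β γ, hskew α j k i γ β]
    have hdiag : ∀ j i, t j j i = 0 := by
      intro j i; have := hanti j j i; linarith
    have htr : ∀ k, t 0 k 0 + t 1 k 1 = 0 := by
      intro k
      have h := h2 α β γ k
      have h' := h2 α γ β k
      rw [Fin.sum_univ_two] at h h'
      simp only [ht]
      linarith
    have two : ∀ x : Fin 2, x = 0 ∨ x = 1 := by decide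
    show t j k i = 0
    rcases two j with rfl | rfl <;> rcases two k with rfl | rfl <;>
      rcases two i with rfl | rfl <;>
      linarith [htr 0, htr 1, hdiag 0 0, hdiag 0 1, hdiag 1 0, hdiag 1 1,
        hanti 0 0 1, hanti 0 1 0, hanti 1 0 1, hanti 1 1 0,
        hanti 0 1 1, hanti 1 0 0]
end
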